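/- Let S_1, …, S_{N+1} be exchangeable real-valued random variables with N ≥ 1, and let 1 ≤ k ≤ N. Then P( S_{N+1} ≤ S_(k) ) ≥ k/(N+1), where S_(k) is the k-th smallest value among S_1, …, S_N. -/

import Mathlib

open MeasureTheory

/-- The `k`-th smallest value (1-indexed) among the values `v 0, …, v (N-1)`. -/
noncomputable def orderStat (N : ℕ) (v : Fin N → ℝ) (k : ℕ) : ℝ :=
  (Multiset.sort (Multiset.map v Finset.univ.val) (· ≤ ·)).getD (k - 1) 0

section Auxiliary

lemma sorted_getD_prop_iff {l : List ℝ} (hl : l.Pairwise (· ≤ ·)) (p : ℝ → Prop)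
    [DecidablePred p] (hp : ∀ a b : ℝ, a ≤ b → p b → p a) {i : ℕ} (hi : i < l.length) :
    p (l.getD i 0) ↔ i < l.countP (fun x => decide (p x)) := by
  rw [List.getD_eq_getElem l 0 hi]
  have hmono : ∀ {a b : ℕ} (ha : a < l.length) (hb : b < l.length), a ≤ b → l[a] ≤ l[b] := by
    intro a b ha hb hab
    rcases eq_or_lt_of_le hab with rfl | h
    · exact le_refl _
    · exact List.pairwise_iff_getElem.1 hl a b ha hb h
  constructor
  · intro h
    have hsplit : l.countP (fun x => decide (p x))
        = (l.take (i+1)).countP (fun x => decide (p x))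
          + (l.drop (i+1)).countP (fun x => decide (p x)) := by
      conv_lhs => rw [← List.take_append_drop (i+1) l]
      rw [List.countP_append]
    have htake : (l.take (i+1)).countP (fun x => decide (p x)) = (l.take (i+1)).length := by
      rw [List.countP_eq_length]
      intro a ha
      obtain ⟨j, hj, rfl⟩ := List.mem_iff_getElem.1 ha
      have hjl : j < l.length := hj.trans_le (l.length_take_le' _)
      have hji : j ≤ i := by
        have := hj; rw [List.length_take] at this; omega
      rw [List.getElem_take]
      exact decide_eq_true (hp _ _ (hmono hjl hi hji) h)
    have hlen : (l.take (i+1)).length = i + 1 := by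
      rw [List.length_take]; omega
    omega
  · intro h
    by_contra hcon
    have hsplit : l.countP (fun x => decide (p x))
        = (l.take i).countP (fun x => decide (p x))
          + (l.drop i).countP (fun x => decide (p x)) := by
      conv_lhs => rw [← List.take_append_drop i l]
      rw [List.countP_append]
    have hdrop : (l.drop i).countP (fun x => decide (p x)) = 0 := by
      rw [List.countP_eq_zero]
      intro a ha hpa
      obtain ⟨j, hj, rfl⟩ := List.mem_iff_getElem.1 ha
      rw [List.getElem_drop] at hpa
      have hjl : i + j < l.length := by
        have := hj; rw [List.length_drop] at this; omega
      exact hcon (hp _ _ (hmono hi hjl (Nat.le_add_right _ _)) (of_decide_eq_true hpa))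
    have htake : (l.take i).countP (fun x => decide (p x)) ≤ i := by
      calc (l.take i).countP (fun x => decide (p x)) ≤ (l.take i).length :=
            List.countP_le_length
        _ ≤ i := by rw [List.length_take]; omega
    omega

lemma countP_sort_eq (N : ℕ) (v : Fin N → ℝ) (p : ℝ → Prop) [DecidablePred p] :
    (Multiset.sort (Multiset.map v Finset.univ.val) (· ≤ ·)).countP (fun x => decide (p x))
      = (Finset.univ.filter (fun i => p (v i))).card := by
  have h1 : ((Multiset.sort (Multiset.map v Finset.univ.val) (· ≤ ·)) : List ℝ).countP
      (fun x => decide (p x)) = Multiset.countP p (Multiset.map v Finset.univ.val) := by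
    rw [← Multiset.coe_countP, Multiset.sort_eq]
  rw [h1, Multiset.countP_map, Finset.card_def, Finset.filter_val]

lemma length_sort_eq (N : ℕ) (v : Fin N → ℝ) :
    (Multiset.sort (Multiset.map v Finset.univ.val) (· ≤ ·)).length = N := by
  rw [Multiset.length_sort, Multiset.card_map, ← Finset.card_def, Finset.card_univ,
    Fintype.card_fin]

lemma orderStat_le_iff (N : ℕ) (v : Fin N → ℝ) {k : ℕ} (hk1 : 1 ≤ k) (hkN : k ≤ N) (t : ℝ) :
    orderStat N v k ≤ t ↔ k ≤ (Finset.univ.filter (fun i => v i ≤ t)).card := by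
  unfold orderStat
  rw [sorted_getD_prop_iff (Multiset.pairwise_sort _ _) (fun x => x ≤ t)
    (fun a b hab hb => hab.trans hb) (by rw [length_sort_eq]; omega),
    countP_sort_eq]
  omega

lemma le_orderStat_iff (N : ℕ) (v : Fin N → ℝ) {k : ℕ} (hk1 : 1 ≤ k) (hkN : k ≤ N) (x : ℝ) :
    x ≤ orderStat N v k ↔ (Finset.univ.filter (fun i => v i < x)).card < k := by
  unfold orderStat
  have := sorted_getD_prop_iff (Multiset.pairwise_sort (Multiset.map v Finset.univ.val) (· ≤ ·))
    (fun y => y < x) (fun a b hab hb => lt_of_le_of_lt hab hb)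
    (i := k - 1) (by rw [length_sort_eq]; omega)
  rw [countP_sort_eq] at this
  constructor
  · intro h
    by_contra hcon
    have := this.2 (by omega)
    exact absurd h (not_le.2 this)
  · intro h
    by_contra hcon
    have := this.1 (not_le.1 hcon)
    omega

lemma measurable_orderStat (N : ℕ) {k : ℕ} (hk1 : 1 ≤ k) (hkN : k ≤ N) :
    Measurable (fun v : Fin N → ℝ => orderStat N v k) := by
  apply measurable_of_Iic
  intro t
  have hset : (fun v : Fin N → ℝ => orderStat N v k) ⁻¹' Set.Iic t
      = ⋃ (s : Finset (Fin N)) (_ : s.card = k), ⋂ i ∈ s, {v : Fin N → ℝ | v i ≤ t} := by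
    ext v
    simp only [Set.mem_preimage, Set.mem_Iic, Set.mem_iUnion, Set.mem_iInter, Set.mem_setOf_eq,
      orderStat_le_iff N v hk1 hkN t]
    constructor
    · intro h
      obtain ⟨s, hs, hcard⟩ := Finset.exists_subset_card_eq h
      exact ⟨s, hcard, fun i hi => (Finset.mem_filter.1 (hs hi)).2⟩
    · rintro ⟨s, hcard, hs⟩
      calc k = s.card := hcard.symm
        _ ≤ _ := Finset.card_le_card fun i hi =>
          Finset.mem_filter.2 ⟨Finset.mem_univ _, hs i hi⟩
  rw [hset]
  refine MeasurableSet.iUnion fun s => MeasurableSet.iUnion fun _ =>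
    MeasurableSet.biInter s.countable_toSet fun i _ => ?_
  exact measurableSet_le (measurable_pi_apply i) measurable_const

lemma orderStat_eq_of_range_eq {M N : ℕ} (v : Fin M → ℝ) {e₁ e₂ : Fin N → Fin M}
    (h₁ : Function.Injective e₁) (h₂ : Function.Injective e₂)
    (hr : Set.range e₁ = Set.range e₂) (k : ℕ) :
    orderStat N (v ∘ e₁) k = orderStat N (v ∘ e₂) k := by
  unfold orderStat
  have key : Multiset.map e₁ Finset.univ.val = Multiset.map e₂ Finset.univ.val := by
    rw [Multiset.Nodup.ext (Finset.univ.nodup.map h₁) (Finset.univ.nodup.map h₂)]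
    intro a
    have := Set.ext_iff.1 hr a
    simpa [Multiset.mem_map, Set.mem_range, List.mem_ofFn] using this
  have h1 : Multiset.map (v ∘ e₁) Finset.univ.val = Multiset.map (v ∘ e₂) Finset.univ.val := by
    rw [← Multiset.map_map, ← Multiset.map_map, key]
  rw [h1]

lemma card_filter_val_lt {n : ℕ} (p : Fin n) :
    (Finset.univ.filter (fun q : Fin n => (q : ℕ) < (p : ℕ))).card = (p : ℕ) := by
  have : Finset.univ.filter (fun q : Fin n => (q : ℕ) < (p : ℕ)) = Finset.Iio p := by
    ext q
    simp only [Finset.mem_filter, Finset.mem_univ, true_and, Finset.mem_Iio, Fin.lt_def]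
  rw [this, Fin.card_Iio]

lemma card_good (N k : ℕ) (hk1 : 1 ≤ k) (hkN : k ≤ N) (v : Fin (N + 1) → ℝ) :
    k ≤ (Finset.univ.filter
      (fun j : Fin (N + 1) => v j ≤ orderStat N (v ∘ j.succAbove) k)).card := by
  classical
  set σ := Tuple.sort v with hσ
  have hmono : Monotone (v ∘ σ) := Tuple.monotone_sort v
  have hsub : ∀ p : Fin (N + 1), (p : ℕ) < k →
      v (σ p) ≤ orderStat N (v ∘ (σ p).succAbove) k := by
    intro p hp
    rw [le_orderStat_iff N _ hk1 hkN]
    have hbound : (Finset.univ.filter fun i : Fin N => (v ∘ (σ p).succAbove) i < v (σ p)).card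
        ≤ (Finset.univ.filter fun q : Fin (N + 1) => (q : ℕ) < (p : ℕ)).card := by
      apply Finset.card_le_card_of_injOn (fun i => σ.symm ((σ p).succAbove i))
      · intro i hi
        simp only [Finset.mem_coe, Finset.mem_filter, Finset.mem_univ, true_and, Function.comp_apply] at hi ⊢
        by_contra hcon
        push_neg at hcon
        have hle : p ≤ σ.symm ((σ p).succAbove i) := by
          rw [Fin.le_def]; omega
        have := hmono hle
        simp only [Function.comp_apply, Equiv.apply_symm_apply] at this
        exact absurd hi (not_lt.2 this)
      · intro a _ b _ h
        exact Fin.succAbove_right_injective (σ.symm.injective h)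
    rw [card_filter_val_lt] at hbound
    calc (Finset.univ.filter fun i : Fin N => (v ∘ (σ p).succAbove) i < v (σ p)).card
        ≤ (p : ℕ) := hbound
      _ < k := hp
  have hcardk : (Finset.univ.filter fun p : Fin (N + 1) => (p : ℕ) < k).card = k := by
    have : Finset.univ.filter (fun p : Fin (N + 1) => (p : ℕ) < k)
        = Finset.univ.filter
          (fun p : Fin (N + 1) => (p : ℕ) < ((⟨k, by omega⟩ : Fin (N + 1)) : ℕ)) := rfl
    rw [this, card_filter_val_lt]
  calc k = (Finset.univ.filter fun p : Fin (N + 1) => (p : ℕ) < k).card := hcardk.symm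
    _ ≤ _ := by
      apply Finset.card_le_card_of_injOn σ
      · intro p hp
        simp only [Finset.mem_coe, Finset.mem_filter, Finset.mem_univ, true_and] at hp ⊢
        exact hsub p hp
      · exact fun a _ b _ h => σ.injective h

end Auxiliary

/-- If `S 0, …, S N` (that is, `N + 1` variables, `N ≥ 1`) are exchangeable
real-valued random variables and `1 ≤ k ≤ N`, then
`P(S_{N+1} ≤ S_(k)) ≥ k / (N + 1)`, where `S_(k)` is the `k`-th smallest among the
first `N` variables. -/
theorem exchangeable_rank_lower_bound
    {Ω : Type*} [MeasurableSpace Ω] (P : Measure Ω) [IsProbabilityMeasure P]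
    (N : ℕ) (hN : 1 ≤ N)
    (S : Fin (N + 1) → Ω → ℝ)
    (hSmeas : ∀ i, Measurable (S i))
    (hexch : ∀ σ : Equiv.Perm (Fin (N + 1)),
      Measure.map (fun ω i => S (σ i) ω) P = Measure.map (fun ω i => S i ω) P)
    (k : ℕ) (hk1 : 1 ≤ k) (hkN : k ≤ N) :
    (k : ENNReal) / (N + 1)
      ≤ P {ω | S (Fin.last N) ω ≤ orderStat N (fun i => S i.castSucc ω) k} := by
  classical
  set T : Ω → (Fin (N + 1) → ℝ) := fun ω i => S i ω with hT
  have hTmeas : Measurable T := measurable_pi_lambda _ hSmeas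
  set B : Fin (N + 1) → Set (Fin (N + 1) → ℝ) :=
    fun j => {v | v j ≤ orderStat N (v ∘ j.succAbove) k} with hB
  have hBmeas : ∀ j, MeasurableSet (B j) := by
    intro j
    apply measurableSet_le (measurable_pi_apply j)
    exact (measurable_orderStat N hk1 hkN).comp
      (measurable_pi_lambda _ fun i => measurable_pi_apply _)
  have hAmeas : ∀ j, MeasurableSet (T ⁻¹' B j) := fun j => hTmeas (hBmeas j)
  -- all events have the same probability
  have hmapeq : ∀ j, P (T ⁻¹' B j) = P (T ⁻¹' B (Fin.last N)) := by
    intro j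
    set σ := Equiv.swap (Fin.last N) j with hσdef
    have hG : Measurable (fun v : Fin (N + 1) → ℝ => fun i => v (σ i)) :=
      measurable_pi_lambda _ fun i => measurable_pi_apply _
    have hcomp : (fun ω i => S (σ i) ω)
        = (fun v : Fin (N + 1) → ℝ => fun i => v (σ i)) ∘ T := rfl
    have hmm := hexch σ
    rw [hcomp, ← Measure.map_map hG hTmeas] at hmm
    have hpre : (fun v : Fin (N + 1) → ℝ => fun i => v (σ i)) ⁻¹' B (Fin.last N) = B j := by
      ext v
      simp only [Set.mem_preimage, hB, Set.mem_setOf_eq]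
      rw [Fin.succAbove_last]
      have hσlast : σ (Fin.last N) = j := Equiv.swap_apply_left _ _
      rw [hσlast]
      have horder : orderStat N ((fun i => v (σ i)) ∘ Fin.castSucc) k
          = orderStat N (v ∘ j.succAbove) k := by
        have heq : (fun i => v (σ i)) ∘ Fin.castSucc
            = v ∘ (fun i : Fin N => σ (Fin.castSucc i)) := rfl
        rw [heq]
        apply orderStat_eq_of_range_eq v
          (σ.injective.comp (Fin.castSucc_injective N))
          (Fin.succAbove_right_injective)
        · ext x
          simp only [Set.mem_range, Fin.range_succAbove, Set.mem_compl_iff,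
            Set.mem_singleton_iff]
          constructor
          · rintro ⟨i, rfl⟩
            intro hcon
            have : Fin.castSucc i = Fin.last N := by
              have := σ.injective (hcon.trans hσlast.symm)
              exact this
            exact absurd (Fin.castSucc_lt_last i) (by rw [this]; exact lt_irrefl _)
          · intro hx
            have hne : σ.symm x ≠ Fin.last N := by
              intro hcon
              apply hx
              have : x = σ (Fin.last N) := by
                rw [← hcon, Equiv.apply_symm_apply]
              rw [this, hσlast]
            obtain ⟨i, hi⟩ := Fin.exists_castSucc_eq.2 hne
            refine ⟨i, ?_⟩
            show σ (Fin.castSucc i) = x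
            rw [hi, Equiv.apply_symm_apply]
      rw [horder]
    calc P (T ⁻¹' B j) = (Measure.map T P) (B j) :=
          (Measure.map_apply hTmeas (hBmeas j)).symm
      _ = (Measure.map T P) ((fun v : Fin (N + 1) → ℝ => fun i => v (σ i)) ⁻¹' B (Fin.last N)) := by
          rw [hpre]
      _ = (Measure.map (fun v : Fin (N + 1) → ℝ => fun i => v (σ i)) (Measure.map T P))
            (B (Fin.last N)) := (Measure.map_apply hG (hBmeas (Fin.last N))).symm
      _ = (Measure.map T P) (B (Fin.last N)) := by rw [hmm]
      _ = P (T ⁻¹' B (Fin.last N)) := Measure.map_apply hTmeas (hBmeas (Fin.last N))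
  -- pointwise counting bound
  have hpoint : ∀ ω, (k : ENNReal)
      ≤ ∑ j : Fin (N + 1), (T ⁻¹' B j).indicator (fun _ => (1 : ENNReal)) ω := by
    intro ω
    have hcard := card_good N k hk1 hkN (T ω)
    have hsum_eq : ∑ j : Fin (N + 1), (T ⁻¹' B j).indicator (fun _ => (1 : ENNReal)) ω
        = ((Finset.univ.filter fun j : Fin (N + 1) =>
            T ω j ≤ orderStat N ((T ω) ∘ j.succAbove) k).card : ENNReal) := by
      rw [Finset.card_filter, Nat.cast_sum]
      apply Finset.sum_congr rfl
      intro j _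
      by_cases h : T ω j ≤ orderStat N ((T ω) ∘ j.succAbove) k
      · rw [if_pos h, Set.indicator_of_mem]
        · simp
        · exact h
      · rw [if_neg h, Set.indicator_of_notMem]
        · simp
        · exact h
    rw [hsum_eq]
    exact_mod_cast hcard
  -- sum of probabilities
  have hsum : (k : ENNReal) ≤ ∑ j : Fin (N + 1), P (T ⁻¹' B j) := by
    calc (k : ENNReal) = ∫⁻ _, (k : ENNReal) ∂P := by simp
      _ ≤ ∫⁻ ω, ∑ j : Fin (N + 1), (T ⁻¹' B j).indicator (fun _ => (1 : ENNReal)) ω ∂P :=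
          lintegral_mono hpoint
      _ = ∑ j : Fin (N + 1), ∫⁻ ω, (T ⁻¹' B j).indicator (fun _ => (1 : ENNReal)) ω ∂P :=
          lintegral_finset_sum _ fun j _ => measurable_const.indicator (hAmeas j)
      _ = ∑ j : Fin (N + 1), P (T ⁻¹' B j) := by
          refine Finset.sum_congr rfl fun j _ => ?_
          exact lintegral_indicator_one (μ := P) (hAmeas j)
  have hsum' : (k : ENNReal) ≤ ((N : ENNReal) + 1) * P (T ⁻¹' B (Fin.last N)) := by
    calc (k : ENNReal) ≤ ∑ j : Fin (N + 1), P (T ⁻¹' B j) := hsum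
      _ = ∑ _j : Fin (N + 1), P (T ⁻¹' B (Fin.last N)) :=
          Finset.sum_congr rfl fun j _ => hmapeq j
      _ = ((N : ENNReal) + 1) * P (T ⁻¹' B (Fin.last N)) := by
          rw [Finset.sum_const, Finset.card_univ, Fintype.card_fin, nsmul_eq_mul]
          push_cast
          ring
  have hfinal : (k : ENNReal) / ((N : ENNReal) + 1) ≤ P (T ⁻¹' B (Fin.last N)) := by
    rw [ENNReal.div_le_iff_le_mul (Or.inl (by simp)) (Or.inl (by finiteness))]
    rw [mul_comm]
    exact hsum'
  have hset : {ω | S (Fin.last N) ω ≤ orderStat N (fun i => S i.castSucc ω) k}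
      = T ⁻¹' B (Fin.last N) := by
    ext ω
    simp only [Set.mem_setOf_eq, Set.mem_preimage, hB, Fin.succAbove_last]
    rfl
  rw [hset]
  exact hfinal
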